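/- arXiv:1205.0092 — 2 statements merged into one kernel-verified Lean document; each statement's English description precedes it below -/
import Mathlib

section
/- For 0 < α < 1 and positive integer n, the constants in the n-particle generator expansion satisfy Σ_{k=2}^n C(n,k)(1-α)_{k-2}(α+1)_{n-k} = (α+1)_{n-1}·(n-1)/(α+1)·Γ(n)/Γ(n) in the sense that the total jump rate identity Σ_{k=2}^n C(n,k)(1-α)_{k-2}(α+1)_{n-k} + (θ/(α+1))Σ_{k=1}^n C(n,k)(1-α)_{k-1}(α)_{n-k} = ((α+1)_{n-1}/(α+1))(θ+n−1) holds for all θ ≥ 0, where (a)_b = Γ(a+b)/Γ(a) is the Pochhammer symbol. -/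
/-- Rising factorial (Pochhammer) `(a)_b = Γ(a+b)/Γ(a)`. -/
noncomputable def poch (a : ℝ) (b : ℕ) : ℝ := Real.Gamma (a + b) / Real.Gamma a

/-- Rising factorial as a product. -/
noncomputable def pp (x : ℝ) (b : ℕ) : ℝ := ∏ i ∈ Finset.range b, (x + i)

lemma pp_zero (x : ℝ) : pp x 0 = 1 := by simp [pp]

lemma pp_succ (x : ℝ) (b : ℕ) : pp x (b + 1) = pp x b * (x + b) := by
  simp [pp, Finset.prod_range_succ]

lemma pp_succ' (x : ℝ) (b : ℕ) : pp x (b + 1) = x * pp (x + 1) b := by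
  unfold pp
  rw [Finset.prod_range_succ']
  rw [mul_comm]
  congr 1
  · push_cast; ring
  · apply Finset.prod_congr rfl
    intro i _
    push_cast
    ring

lemma poch_eq_pp (a : ℝ) (ha : 0 < a) (b : ℕ) : poch a b = pp a b := by
  induction b with
  | zero =>
    simp [poch, pp, div_self (Real.Gamma_pos_of_pos ha).ne']
  | succ b ih =>
    have h1 : a + ((b : ℝ) + 1) = (a + b) + 1 := by ring
    have h2 : a + (b : ℝ) ≠ 0 := by positivity
    unfold poch at *
    push_cast
    rw [h1, Real.Gamma_add_one h2, pp_succ, ← ih]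
    ring

lemma pp_vandermonde (x y : ℝ) (n : ℕ) :
    ∑ k ∈ Finset.range (n + 1), (n.choose k : ℝ) * pp x k * pp y (n - k)
      = pp (x + y) n := by
  induction n with
  | zero => simp [pp]
  | succ n ih =>
    have key : ∑ k ∈ Finset.range (n + 2), ((n + 1).choose k : ℝ) * pp x k * pp y (n + 1 - k)
        = ∑ k ∈ Finset.range (n + 1), (n.choose k : ℝ) * pp x k * pp y (n + 1 - k)
          + ∑ k ∈ Finset.range (n + 1), (n.choose k : ℝ) * pp x (k + 1) * pp y (n - k) := by
      rw [Finset.sum_range_succ'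
          (fun k => ((n + 1).choose k : ℝ) * pp x k * pp y (n + 1 - k)) (n + 1),
        Finset.sum_range_succ'
          (fun k => ((n).choose k : ℝ) * pp x k * pp y (n + 1 - k)) n]
      simp only [Nat.choose_succ_succ, Nat.cast_add, Nat.choose_zero_right, Nat.cast_one,
        Nat.succ_sub_succ_eq_sub, Nat.sub_zero, add_mul, pp_zero]
      rw [Finset.sum_add_distrib]
      rw [Finset.sum_range_succ (fun i => ((n.choose (i + 1) : ℝ)) * pp x (i + 1) * pp y (n - i))]
      simp [Nat.choose_succ_self]
      ring
    rw [key]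
    have step : ∀ k ∈ Finset.range (n + 1),
        (n.choose k : ℝ) * pp x k * pp y (n + 1 - k)
          + (n.choose k : ℝ) * pp x (k + 1) * pp y (n - k)
        = ((n.choose k : ℝ) * pp x k * pp y (n - k)) * (x + y + n) := by
      intro k hk
      have hkn : k ≤ n := Nat.lt_succ_iff.mp (Finset.mem_range.mp hk)
      have h1 : n + 1 - k = (n - k) + 1 := by omega
      have h2 : ((n - k : ℕ) : ℝ) = (n : ℝ) - k := by
        rw [Nat.cast_sub hkn]
      rw [h1, pp_succ, pp_succ, h2]
      ring
    rw [← Finset.sum_add_distrib, Finset.sum_congr rfl step, ← Finset.sum_mul, ih, pp_succ]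

lemma pp_zero_left {n : ℕ} (hn : 1 ≤ n) : pp 0 n = 0 := by
  apply Finset.prod_eq_zero (Finset.mem_range.mpr hn)
  simp

theorem stmt16 (α : ℝ) (hα : 0 < α) (hα1 : α < 1) (n : ℕ) (hn : 1 ≤ n) (θ : ℝ)
    (hθ : 0 ≤ θ) :
    (∑ k ∈ Finset.Icc 2 n, (n.choose k : ℝ) * poch (1 - α) (k - 2) * poch (α + 1) (n - k))
      + (θ / (α + 1)) * ∑ k ∈ Finset.Icc 1 n,
          (n.choose k : ℝ) * poch (1 - α) (k - 1) * poch α (n - k)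
      = (poch (α + 1) (n - 1) / (α + 1)) * (θ + n - 1) := by
  obtain ⟨m, rfl⟩ : ∃ m, n = m + 1 := ⟨n - 1, by omega⟩
  set n := m + 1 with hn'
  have hα1' : (0:ℝ) < α + 1 := by linarith
  have h1α : (0:ℝ) < 1 - α := by linarith
  -- rewrite poch as pp
  have hrw2 : ∀ k, poch (1 - α) k = pp (1 - α) k := fun k => poch_eq_pp _ h1α k
  have hrw3 : ∀ k, poch (α + 1) k = pp (α + 1) k := fun k => poch_eq_pp _ hα1' k
  have hrw4 : ∀ k, poch α k = pp α k := fun k => poch_eq_pp _ hα k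
  simp only [hrw2, hrw3, hrw4]
  -- Identity 1
  have V1 := pp_vandermonde (-α) α n
  rw [neg_add_cancel, pp_zero_left hn] at V1
  rw [Finset.sum_range_succ' (fun k => ((n.choose k : ℝ)) * pp (-α) k * pp α (n - k)) n] at V1
  have e1 : ∀ i, pp (-α) (i + 1) = -α * pp (1 - α) i := by
    intro i
    rw [pp_succ']
    congr 1
    ring_nf
  simp only [e1, pp_zero, Nat.choose_zero_right, Nat.cast_one, Nat.sub_zero] at V1
  have I1 : ∑ i ∈ Finset.range n, ((n.choose (i + 1) : ℝ)) * pp (1 - α) i * pp α (n - (i + 1))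
      = pp (α + 1) m := by
    apply mul_left_cancel₀ hα.ne'
    have hppn : pp α n = α * pp (α + 1) m := by rw [hn', pp_succ']
    rw [← hppn]
    have : (α : ℝ) * ∑ i ∈ Finset.range n,
        ((n.choose (i + 1) : ℝ)) * pp (1 - α) i * pp α (n - (i + 1))
        = -∑ i ∈ Finset.range n, (n.choose (i + 1) : ℝ) * (-α * pp (1 - α) i) * pp α (n - (i + 1)) := by
      rw [← Finset.sum_neg_distrib, Finset.mul_sum]
      apply Finset.sum_congr rfl
      intro i _
      ring
    rw [this]
    linarith [V1]
  -- Identity 2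
  have V2 := pp_vandermonde (-(α + 1)) (α + 1) n
  rw [neg_add_cancel, pp_zero_left hn] at V2
  rw [Finset.sum_range_succ' (fun k => ((n.choose k : ℝ)) * pp (-(α+1)) k * pp (α+1) (n - k)) n] at V2
  rw [Finset.sum_range_succ' (fun i => ((n.choose (i+1) : ℝ)) * pp (-(α+1)) (i+1) * pp (α+1) (n - (i+1))) m] at V2
  have e2 : ∀ i, pp (-(α+1)) (i + 2) = α * (α + 1) * pp (1 - α) i := by
    intro i
    rw [pp_succ']
    have : -(α+1) + 1 = -α := by ring
    rw [this, pp_succ']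
    have : -α + 1 = 1 - α := by ring
    rw [this]
    ring
  have e3 : pp (-(α+1)) 1 = -(α+1) := by simp [pp]
  have hch1 : (n.choose 1 : ℝ) = n := by simp
  simp only [e3, pp_zero, Nat.choose_zero_right, Nat.cast_one, Nat.sub_zero, hch1] at V2
  have V2' : ∑ i ∈ Finset.range m,
      ((n.choose (i + 2) : ℝ)) * (α * (α + 1) * pp (1 - α) i) * pp (α+1) (n - (i + 2))
      + (n : ℝ) * -(α+1) * pp (α+1) (n - 1) + pp (α+1) n = 0 := by
    have : ∀ i ∈ Finset.range m,
        ((n.choose (i + 1 + 1) : ℝ)) * pp (-(α+1)) (i + 1 + 1) * pp (α+1) (n - (i + 1 + 1))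
        = ((n.choose (i + 2) : ℝ)) * (α * (α + 1) * pp (1 - α) i) * pp (α+1) (n - (i + 2)) := by
      intro i _
      rw [show i + 1 + 1 = i + 2 from rfl, e2]
    rw [← Finset.sum_congr rfl this]
    linarith [V2]
  have hnm : n - 1 = m := by omega
  rw [hnm] at V2'
  have hppn2 : pp (α+1) n = pp (α + 1) m * (α + 1 + m) := by rw [hn', pp_succ]
  have I2 : ∑ i ∈ Finset.range m,
      ((n.choose (i + 2) : ℝ)) * pp (1 - α) i * pp (α+1) (n - (i + 2))
      = pp (α + 1) m * m / (α + 1) := by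
    have hne : (α:ℝ) * (α + 1) ≠ 0 := by positivity
    apply mul_left_cancel₀ hne
    have hs : (α * (α + 1)) * ∑ i ∈ Finset.range m,
        ((n.choose (i + 2) : ℝ)) * pp (1 - α) i * pp (α+1) (n - (i + 2))
        = ∑ i ∈ Finset.range m,
        ((n.choose (i + 2) : ℝ)) * (α * (α + 1) * pp (1 - α) i) * pp (α+1) (n - (i + 2)) := by
      rw [Finset.mul_sum]
      apply Finset.sum_congr rfl
      intro i _
      ring
    rw [hs]
    have hcast : ((n : ℝ)) = (m : ℝ) + 1 := by rw [hn']; push_cast; ring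
    have : α * (α + 1) * (pp (α + 1) m * ↑m / (α + 1)) = α * pp (α + 1) m * m := by
      field_simp
    rw [this]
    rw [hppn2, hcast] at V2'
    linear_combination V2'
  -- convert Icc sums to range sums
  have hIcc1 : ∑ k ∈ Finset.Icc 1 n, (n.choose k : ℝ) * pp (1 - α) (k - 1) * pp α (n - k)
      = ∑ i ∈ Finset.range n, ((n.choose (i + 1) : ℝ)) * pp (1 - α) i * pp α (n - (i + 1)) := by
    rw [← Finset.Ico_add_one_right_eq_Icc, Finset.sum_Ico_eq_sum_range]
    apply Finset.sum_congr (by congr 1)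
    intro i _
    rw [show 1 + i = i + 1 from by omega]
    simp
  have hIcc2 : ∑ k ∈ Finset.Icc 2 n, (n.choose k : ℝ) * pp (1 - α) (k - 2) * pp (α+1) (n - k)
      = ∑ i ∈ Finset.range m, ((n.choose (i + 2) : ℝ)) * pp (1 - α) i * pp (α+1) (n - (i + 2)) := by
    rw [← Finset.Ico_add_one_right_eq_Icc, Finset.sum_Ico_eq_sum_range]
    apply Finset.sum_congr (by congr 1)
    intro i _
    rw [show 2 + i = i + 2 from by omega]
    simp
  rw [hnm, hIcc1, hIcc2, I1, I2]
  have hcast : ((n : ℝ)) = (m : ℝ) + 1 := by rw [hn']; push_cast; ring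
  rw [hcast]
  field_simp
  ring
end

section
/- Let 0 < α < 1, θ > 0, and suppose a probability measure P on [0,1] satisfies, for all n ≥ 1, the moment recursion obtained from stationarity: ((α+1)_{n-1}/(α+1))(θ+n−1)·m_n = Γ(n)^{-1}Σ_{k=2}^n C(n,k)(1-α)_{k-2}(α+1)_{n-k} m_{n-k+1} + (θ/((α+1)Γ(n)))Σ_{k=1}^n C(n,k)(1-α)_{k-1}(α)_{n-k} y^k m_{n-k}, where m_n = ∫ x^n P(dx), m_0 = 1, and y ∈ [0,1] is fixed. Then the moments m_n are uniquely determined by y, α, θ; hence at most one probability measure on [0,1] satisfies this recursion. -/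
open MeasureTheory

/-- The stationarity moment recursion for the moments of a probability measure `P`
on `[0,1]`, for the one-dimensional generalized Fleming–Viot generator with
mutation measure `θ·(y δ₁ + (1-y) δ₀)`. -/
def momentRecursion (α θ y : ℝ) (P : Measure ℝ) : Prop :=
  ∀ n : ℕ, 1 ≤ n →
    (poch (α + 1) (n - 1) / (α + 1)) * (θ + n - 1) * (∫ x, x ^ n ∂P)
      = (1 / Real.Gamma n) * ∑ k ∈ Finset.Icc 2 n,
          (n.choose k : ℝ) * poch (1 - α) (k - 2) * poch (α + 1) (n - k)
            * (∫ x, x ^ (n - k + 1) ∂P)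
        + (θ / ((α + 1) * Real.Gamma n)) * ∑ k ∈ Finset.Icc 1 n,
            (n.choose k : ℝ) * poch (1 - α) (k - 1) * poch α (n - k) * y ^ k
              * (∫ x, x ^ (n - k) ∂P)

/-- Monomials are integrable w.r.t. a probability measure supported on `[0,1]`. -/
lemma integrable_pow_of_Icc (P : Measure ℝ) [IsProbabilityMeasure P]
    (hP : ∀ᵐ x ∂P, x ∈ Set.Icc (0:ℝ) 1) (n : ℕ) : Integrable (fun x => x ^ n) P := by
  refine (integrable_const (1:ℝ)).mono' ((continuous_pow n).aestronglyMeasurable) ?_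
  filter_upwards [hP] with x hx
  rw [Real.norm_eq_abs, abs_pow]
  exact pow_le_one₀ (abs_nonneg x) (abs_le.mpr ⟨by linarith [hx.1], hx.2⟩)

theorem stmt17 (α θ y : ℝ) (hα : 0 < α) (hα1 : α < 1) (hθ : 0 < θ)
    (hy : y ∈ Set.Icc (0:ℝ) 1)
    (P P' : Measure ℝ) [IsProbabilityMeasure P] [IsProbabilityMeasure P']
    (hP : ∀ᵐ x ∂P, x ∈ Set.Icc (0:ℝ) 1) (hP' : ∀ᵐ x ∂P', x ∈ Set.Icc (0:ℝ) 1)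
    (hrec : momentRecursion α θ y P) (hrec' : momentRecursion α θ y P') :
    (∀ n : ℕ, ∫ x, x ^ n ∂P = ∫ x, x ^ n ∂P') ∧ P = P' := by
  -- Step 1: all moments agree, by strong induction.
  have key : ∀ n : ℕ, ∫ x, x ^ n ∂P = ∫ x, x ^ n ∂P' := by
    intro n
    induction n using Nat.strong_induction_on with
    | _ n ih =>
      rcases Nat.eq_zero_or_pos n with h0 | hn
      · subst h0; simp
      · have h1 := hrec n hn
        have h2 := hrec' n hn
        have hsum1 : ∑ k ∈ Finset.Icc 2 n, (n.choose k : ℝ) * poch (1 - α) (k - 2)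
              * poch (α + 1) (n - k) * (∫ x, x ^ (n - k + 1) ∂P)
            = ∑ k ∈ Finset.Icc 2 n, (n.choose k : ℝ) * poch (1 - α) (k - 2)
              * poch (α + 1) (n - k) * (∫ x, x ^ (n - k + 1) ∂P') := by
          refine Finset.sum_congr rfl fun k hk => ?_
          rw [Finset.mem_Icc] at hk
          rw [ih (n - k + 1) (by omega)]
        have hsum2 : ∑ k ∈ Finset.Icc 1 n, (n.choose k : ℝ) * poch (1 - α) (k - 1)
              * poch α (n - k) * y ^ k * (∫ x, x ^ (n - k) ∂P)
            = ∑ k ∈ Finset.Icc 1 n, (n.choose k : ℝ) * poch (1 - α) (k - 1)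
              * poch α (n - k) * y ^ k * (∫ x, x ^ (n - k) ∂P') := by
          refine Finset.sum_congr rfl fun k hk => ?_
          rw [Finset.mem_Icc] at hk
          rw [ih (n - k) (by omega)]
        rw [hsum1, hsum2] at h1
        have hc : poch (α + 1) (n - 1) / (α + 1) * (θ + n - 1) ≠ 0 := by
          have hpoch : 0 < poch (α + 1) (n - 1) := by
            unfold poch
            exact div_pos (Real.Gamma_pos_of_pos (by positivity))
              (Real.Gamma_pos_of_pos (by positivity))
          have hn1 : (1:ℝ) ≤ (n:ℝ) := Nat.one_le_cast.mpr hn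
          have : 0 < poch (α + 1) (n - 1) / (α + 1) * (θ + n - 1) := by
            apply mul_pos (div_pos hpoch (by linarith)) (by linarith)
          exact ne_of_gt this
        exact mul_left_cancel₀ hc (h1.trans h2.symm)
  refine ⟨key, ?_⟩
  -- Step 2: integrals of polynomials agree.
  have hpoly : ∀ p : Polynomial ℝ, ∫ x, p.eval x ∂P = ∫ x, p.eval x ∂P' := by
    intro p
    have hev : ∀ x : ℝ, p.eval x = ∑ i ∈ Finset.range (p.natDegree + 1), p.coeff i * x ^ i := by
      intro x; exact Polynomial.eval_eq_sum_range x
    simp only [hev]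
    rw [integral_finset_sum _ (fun i _ => (integrable_pow_of_Icc P hP i).const_mul _),
      integral_finset_sum _ (fun i _ => (integrable_pow_of_Icc P' hP' i).const_mul _)]
    refine Finset.sum_congr rfl fun i _ => ?_
    rw [integral_const_mul, integral_const_mul, key i]
  -- Step 3: integrals of bounded continuous functions agree.
  have hbdd : ∀ g : ℝ → ℝ, Continuous g → ∀ C : ℝ, (∀ x, |g x| ≤ C) →
      ∫ x, g x ∂P = ∫ x, g x ∂P' := by
    intro g hg C hC
    have hgint : Integrable g P := by
      refine (integrable_const C).mono' hg.aestronglyMeasurable ?_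
      exact ae_of_all _ fun x => by simpa [Real.norm_eq_abs] using hC x
    have hgint' : Integrable g P' := by
      refine (integrable_const C).mono' hg.aestronglyMeasurable ?_
      exact ae_of_all _ fun x => by simpa [Real.norm_eq_abs] using hC x
    have main : ∀ ε : ℝ, 0 < ε → |(∫ x, g x ∂P) - ∫ x, g x ∂P'| ≤ ε := by
      intro ε hε
      obtain ⟨p, hp⟩ := exists_polynomial_near_of_continuousOn 0 1 g hg.continuousOn
        (ε / 2) (by linarith)
      have hpint : Integrable (fun x => p.eval x) P := by
        have hev : ∀ x : ℝ, p.eval x = ∑ i ∈ Finset.range (p.natDegree + 1),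
            p.coeff i * x ^ i := fun x => Polynomial.eval_eq_sum_range x
        simp only [hev]
        exact integrable_finset_sum _ fun i _ => (integrable_pow_of_Icc P hP i).const_mul _
      have hpint' : Integrable (fun x => p.eval x) P' := by
        have hev : ∀ x : ℝ, p.eval x = ∑ i ∈ Finset.range (p.natDegree + 1),
            p.coeff i * x ^ i := fun x => Polynomial.eval_eq_sum_range x
        simp only [hev]
        exact integrable_finset_sum _ fun i _ => (integrable_pow_of_Icc P' hP' i).const_mul _
      have est : ∀ (Q : Measure ℝ), IsProbabilityMeasure Q → (∀ᵐ x ∂Q, x ∈ Set.Icc (0:ℝ) 1) →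
          Integrable g Q → Integrable (fun x => p.eval x) Q →
          |(∫ x, g x ∂Q) - ∫ x, p.eval x ∂Q| ≤ ε / 2 := by
        intro Q hQprob hQ hgQ hpQ
        rw [← integral_sub hgQ hpQ]
        calc |∫ x, (g x - p.eval x) ∂Q| ≤ ∫ x, |g x - p.eval x| ∂Q :=
              by simpa [Real.norm_eq_abs] using
                norm_integral_le_integral_norm (fun x => g x - p.eval x) (μ := Q)
          _ ≤ ∫ _x, (ε / 2) ∂Q := by
              refine integral_mono_ae (hgQ.sub hpQ).abs (integrable_const _) ?_
              filter_upwards [hQ] with x hx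
              rw [abs_sub_comm]
              exact le_of_lt (hp x hx)
          _ = ε / 2 := by simp
      have e1 := est P ‹_› hP hgint hpint
      have e2 := est P' ‹_› hP' hgint' hpint'
      have hpp := hpoly p
      calc |(∫ x, g x ∂P) - ∫ x, g x ∂P'|
          = |((∫ x, g x ∂P) - ∫ x, p.eval x ∂P)
              - ((∫ x, g x ∂P') - ∫ x, p.eval x ∂P')| := by rw [hpp]; ring_nf
        _ ≤ |(∫ x, g x ∂P) - ∫ x, p.eval x ∂P|
              + |(∫ x, g x ∂P') - ∫ x, p.eval x ∂P'| := abs_sub _ _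
        _ ≤ ε / 2 + ε / 2 := add_le_add e1 e2
        _ = ε := by ring
    have : |(∫ x, g x ∂P) - ∫ x, g x ∂P'| ≤ 0 := by
      by_contra h
      push_neg at h
      have := main (|(∫ x, g x ∂P) - ∫ x, g x ∂P'| / 2) (by linarith)
      linarith
    have := abs_nonneg ((∫ x, g x ∂P) - ∫ x, g x ∂P')
    have hz : |(∫ x, g x ∂P) - ∫ x, g x ∂P'| = 0 := le_antisymm ‹_› ‹_›
    have := abs_eq_zero.mp hz
    linarith [this]
  -- Step 4: conclude equality of measures.
  apply ext_of_forall_lintegral_eq_of_IsFiniteMeasure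
  intro f
  have hfin : ∫⁻ x, f x ∂P ≠ ⊤ := (f.lintegral_lt_top_of_nnreal P).ne
  have hfin' : ∫⁻ x, f x ∂P' ≠ ⊤ := (f.lintegral_lt_top_of_nnreal P').ne
  rw [← ENNReal.toReal_eq_toReal_iff' hfin hfin',
    BoundedContinuousFunction.toReal_lintegral_coe_eq_integral,
    BoundedContinuousFunction.toReal_lintegral_coe_eq_integral]
  refine hbdd (fun x => (f x : ℝ)) (NNReal.continuous_coe.comp f.continuous)
    (nndist f 0 : ℝ) fun x => ?_
  rw [abs_of_nonneg (f x).coe_nonneg]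
  rw [nndist_comm] at *; exact_mod_cast f.apply_le_nndist_zero x
end
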